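/- arXiv:1807.00800 — 3 statements merged into one kernel-verified Lean document; each statement's English description precedes it below -/
import Mathlib

section
/- Let n ≥ 1, let U, A, B be 2^n × 2^n unitary matrices, let σ be a Hermitian 2^n × 2^n matrix with σ² = I, and fix j ∈ {1,…,n}. Define g(α) := C_LHST^{(j)}(U, A·e^{−iασ/2}·B). Then g is differentiable and satisfies the parameter-shift rule g'(α) = (1/2)( g(α + π/2) − g(α − π/2) ) for all α ∈ ℝ. -/
open Matrix Kronecker Complex

noncomputable section

/-- The Hilbert-Schmidt test cost `C_HST(U,V) = 1 - |Tr(V†U)|²/d²` for `d × d` matrices. -/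
def CHSTd (d : ℕ) (U V : Matrix (Fin d) (Fin d) ℂ) : ℝ :=
  1 - ‖(Vᴴ * U).trace‖ ^ 2 / (d : ℝ) ^ 2

/-- The Hilbert-Schmidt test cost for unitaries on `n` qubits (`d = 2^n`). -/
def CHST (n : ℕ) (U V : Matrix (Fin n → Fin 2) (Fin n → Fin 2) ℂ) : ℝ :=
  1 - ‖(Vᴴ * U).trace‖ ^ 2 / ((2 : ℝ) ^ n) ^ 2

/-- The local channel `E_j(ρ) = Tr_{j̄}[ W (ρ_(j) ⊗ I/2^(n-1)) W† ]`, where `ρ` is placed on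
qubit `j`, the maximally mixed state on the other qubits, and the partial trace is over all
qubits except `j`.  (The sum over `r` double-counts the assignments of the qubits other than
`j`, whence the extra factor `1/2`.) -/
def Ej (n : ℕ) (j : Fin n) (W : Matrix (Fin n → Fin 2) (Fin n → Fin 2) ℂ)
    (ρ : Matrix (Fin 2) (Fin 2) ℂ) : Matrix (Fin 2) (Fin 2) ℂ :=
  Matrix.of fun a b =>
    (1 / 2 ^ (n - 1) : ℂ) * (1 / 2) *
      ∑ r : Fin n → Fin 2, ∑ s : Fin n → Fin 2, ∑ t : Fin n → Fin 2,
        (if Function.update s j 0 = Function.update t j 0 then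
          W (Function.update r j a) s * ρ (s j) (t j) * star (W (Function.update r j b) t)
        else 0)

/-- The two-qubit maximally entangled state `|Φ₂⁺⟩ = (|00⟩+|11⟩)/√2`. -/
def phi2 : (Fin 2 × Fin 2) → ℂ := fun p => if p.1 = p.2 then ((1 / Real.sqrt 2 : ℝ) : ℂ) else 0

/-- The projector `|Φ₂⁺⟩⟨Φ₂⁺|`. -/
def phi2Proj : Matrix (Fin 2 × Fin 2) (Fin 2 × Fin 2) ℂ :=
  Matrix.of fun p q => if p.1 = p.2 ∧ q.1 = q.2 then (1 / 2 : ℂ) else 0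

/-- `(E ⊗ id)(ρ)` for a map `E` on one-qubit matrices and a two-qubit matrix `ρ`. -/
def tensorId (E : Matrix (Fin 2) (Fin 2) ℂ → Matrix (Fin 2) (Fin 2) ℂ)
    (ρ : Matrix (Fin 2 × Fin 2) (Fin 2 × Fin 2) ℂ) :
    Matrix (Fin 2 × Fin 2) (Fin 2 × Fin 2) ℂ :=
  Matrix.of fun p q => ∑ a : Fin 2, ∑ b : Fin 2,
    ρ (a, p.2) (b, q.2) * E (Matrix.single a b 1) p.1 q.1

/-- The entanglement fidelity `F_e^(j) = ⟨Φ₂⁺|(E_j ⊗ id)(|Φ₂⁺⟩⟨Φ₂⁺|)|Φ₂⁺⟩`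
(as a complex number), with `W = U V†`. -/
def FeC (n : ℕ) (j : Fin n) (U V : Matrix (Fin n → Fin 2) (Fin n → Fin 2) ℂ) : ℂ :=
  star phi2 ⬝ᵥ (tensorId (Ej n j (U * Vᴴ)) phi2Proj).mulVec phi2

/-- The entanglement fidelity `F_e^(j)` (a real number). -/
def Fe (n : ℕ) (j : Fin n) (U V : Matrix (Fin n → Fin 2) (Fin n → Fin 2) ℂ) : ℝ :=
  (FeC n j U V).re

/-- The local Hilbert-Schmidt cost for qubit `j`: `C_LHST^(j)(U,V) = 1 - F_e^(j)`. -/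
def CLHSTj (n : ℕ) (j : Fin n) (U V : Matrix (Fin n → Fin 2) (Fin n → Fin 2) ℂ) : ℝ :=
  1 - Fe n j U V

/-- The local Hilbert-Schmidt cost `C_LHST(U,V) = (1/n) Σ_j C_LHST^(j)(U,V)`. -/
def CLHST (n : ℕ) (U V : Matrix (Fin n → Fin 2) (Fin n → Fin 2) ℂ) : ℝ :=
  (1 / n : ℝ) * ∑ j : Fin n, CLHSTj n j U V

end


-- ===== auxiliary definitions and lemmas =====
noncomputable section AuxPS

/-- Bilinear version of `Ej`. -/
def EjB (n : ℕ) (j : Fin n) (X Y : Matrix (Fin n → Fin 2) (Fin n → Fin 2) ℂ)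
    (ρ : Matrix (Fin 2) (Fin 2) ℂ) : Matrix (Fin 2) (Fin 2) ℂ :=
  Matrix.of fun a b =>
    (1 / 2 ^ (n - 1) : ℂ) * (1 / 2) *
      ∑ r : Fin n → Fin 2, ∑ s : Fin n → Fin 2, ∑ t : Fin n → Fin 2,
        (if Function.update s j 0 = Function.update t j 0 then
          X (Function.update r j a) s * ρ (s j) (t j) * star (Y (Function.update r j b) t)
        else 0)

/-- Bilinear version of `FeC`. -/
def FeB (n : ℕ) (j : Fin n) (X Y : Matrix (Fin n → Fin 2) (Fin n → Fin 2) ℂ) : ℂ :=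
  star phi2 ⬝ᵥ (tensorId (EjB n j X Y) phi2Proj).mulVec phi2

lemma FeC_eq_FeB (n : ℕ) (j : Fin n) (U V : Matrix (Fin n → Fin 2) (Fin n → Fin 2) ℂ) :
    FeC n j U V = FeB n j (U * Vᴴ) (U * Vᴴ) := rfl

lemma EjB_expand (n : ℕ) (j : Fin n) (c s : ℝ)
    (X Y : Matrix (Fin n → Fin 2) (Fin n → Fin 2) ℂ) (ρ : Matrix (Fin 2) (Fin 2) ℂ) :
    EjB n j ((c : ℂ) • X + ((s : ℂ) * Complex.I) • Y) ((c : ℂ) • X + ((s : ℂ) * Complex.I) • Y) ρ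
      = ((c : ℂ) ^ 2) • EjB n j X X ρ
        + ((c : ℂ) * (s : ℂ) * Complex.I) • EjB n j Y X ρ
        + (-((c : ℂ) * (s : ℂ) * Complex.I)) • EjB n j X Y ρ
        + ((s : ℂ) ^ 2) • EjB n j Y Y ρ := by
  ext a b
  simp only [EjB, Matrix.of_apply]
  have hterm : ∀ (r s' t : Fin n → Fin 2),
      (if Function.update s' j 0 = Function.update t j 0 then
        ((c : ℂ) • X + ((s : ℂ) * Complex.I) • Y) (Function.update r j a) s' * ρ (s' j) (t j) *
          star (((c : ℂ) • X + ((s : ℂ) * Complex.I) • Y) (Function.update r j b) t)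
      else 0)
      = (c : ℂ)^2 * (if Function.update s' j 0 = Function.update t j 0 then
            X (Function.update r j a) s' * ρ (s' j) (t j) * star (X (Function.update r j b) t) else 0)
        + ((c : ℂ) * (s : ℂ) * Complex.I) * (if Function.update s' j 0 = Function.update t j 0 then
            Y (Function.update r j a) s' * ρ (s' j) (t j) * star (X (Function.update r j b) t) else 0)
        + (-((c : ℂ) * (s : ℂ) * Complex.I)) * (if Function.update s' j 0 = Function.update t j 0 then
            X (Function.update r j a) s' * ρ (s' j) (t j) * star (Y (Function.update r j b) t) else 0)
        + ((s : ℂ)^2) * (if Function.update s' j 0 = Function.update t j 0 then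
            Y (Function.update r j a) s' * ρ (s' j) (t j) * star (Y (Function.update r j b) t) else 0) := by
    intro r s' t
    split_ifs with h
    · simp only [Matrix.add_apply, Matrix.smul_apply, smul_eq_mul, star_add, star_mul']
      simp only [Complex.star_def, _root_.map_mul, Complex.conj_ofReal, Complex.conj_I]
      ring_nf
      simp only [Complex.I_sq]
      ring
    · ring
  simp only [hterm, Finset.sum_add_distrib, ← Finset.mul_sum]
  simp only [Matrix.add_apply, Matrix.smul_apply, Matrix.of_apply, smul_eq_mul]
  ring

lemma FeB_expand (n : ℕ) (j : Fin n) (c s : ℝ)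
    (X Y : Matrix (Fin n → Fin 2) (Fin n → Fin 2) ℂ) :
    FeB n j ((c : ℂ) • X + ((s : ℂ) * Complex.I) • Y) ((c : ℂ) • X + ((s : ℂ) * Complex.I) • Y)
      = ((c : ℂ) ^ 2) * FeB n j X X
        + ((c : ℂ) * (s : ℂ) * Complex.I) * FeB n j Y X
        + (-((c : ℂ) * (s : ℂ) * Complex.I)) * FeB n j X Y
        + ((s : ℂ) ^ 2) * FeB n j Y Y := by
  have h1 : tensorId (EjB n j ((c : ℂ) • X + ((s : ℂ) * Complex.I) • Y)
        ((c : ℂ) • X + ((s : ℂ) * Complex.I) • Y)) phi2Proj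
      = ((c : ℂ) ^ 2) • tensorId (EjB n j X X) phi2Proj
        + ((c : ℂ) * (s : ℂ) * Complex.I) • tensorId (EjB n j Y X) phi2Proj
        + (-((c : ℂ) * (s : ℂ) * Complex.I)) • tensorId (EjB n j X Y) phi2Proj
        + ((s : ℂ) ^ 2) • tensorId (EjB n j Y Y) phi2Proj := by
    ext p q
    simp only [tensorId, Matrix.of_apply, EjB_expand, Matrix.add_apply, Matrix.smul_apply,
      smul_eq_mul, mul_add, Finset.sum_add_distrib]
    simp only [mul_left_comm _ ((c : ℂ) ^ 2) _, mul_left_comm _ ((c : ℂ) * (s : ℂ) * Complex.I) _,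
      mul_left_comm _ (-((c : ℂ) * (s : ℂ) * Complex.I)) _, mul_left_comm _ ((s : ℂ) ^ 2) _,
      ← Finset.mul_sum]
  simp only [FeB, h1, Matrix.add_mulVec, Matrix.smul_mulVec, dotProduct_add,
    dotProduct_smul, smul_eq_mul]

lemma exp_invol {n : ℕ} (σ : Matrix (Fin n → Fin 2) (Fin n → Fin 2) ℂ)
    (hinv : σ * σ = 1) (θ : ℝ) :
    NormedSpace.exp ((-(θ : ℝ) * Complex.I : ℂ) • σ)
      = (Real.cos θ : ℂ) • (1 : Matrix (Fin n → Fin 2) (Fin n → Fin 2) ℂ)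
        + (-(Complex.I) * (Real.sin θ : ℂ)) • σ := by
  set z : ℂ := (-(θ : ℝ) * Complex.I : ℂ) with hz
  have hσ2 : σ ^ 2 = 1 := by rw [sq, hinv]
  have heven : ∀ k : ℕ, σ ^ (2 * k) = 1 := by
    intro k; rw [pow_mul, hσ2, one_pow]
  have hodd : ∀ k : ℕ, σ ^ (2 * k + 1) = σ := by
    intro k; rw [pow_succ, heven, one_mul]
  have hzsq : ∀ k : ℕ, z ^ (2 * k) = (-1) ^ k * (θ : ℂ) ^ (2 * k) := by
    intro k
    rw [pow_mul, pow_mul, hz]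
    rw [show ((-(θ:ℝ) : ℂ) * Complex.I) ^ 2 = -1 * (θ:ℂ)^2 by
      rw [mul_pow, Complex.I_sq]; ring]
    rw [mul_pow]
  have hf : HasSum (fun m : ℕ => ((m.factorial : ℂ))⁻¹ • (z • σ) ^ m)
      ((Real.cos θ : ℂ) • (1 : Matrix (Fin n → Fin 2) (Fin n → Fin 2) ℂ)
        + (-(Complex.I) * (Real.sin θ : ℂ)) • σ) := by
    have he : HasSum (fun k : ℕ => ((2*k).factorial : ℂ)⁻¹ • (z • σ) ^ (2*k))
        ((Real.cos θ : ℂ) • (1 : Matrix (Fin n → Fin 2) (Fin n → Fin 2) ℂ)) := by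
      have := (Complex.hasSum_cos (θ : ℂ)).smul_const
        (1 : Matrix (Fin n → Fin 2) (Fin n → Fin 2) ℂ)
      rw [Complex.ofReal_cos]
      convert this using 2 with k
      rw [smul_pow, heven, smul_smul]
      congr 1
      rw [hzsq]
      field_simp
    have ho : HasSum (fun k : ℕ => ((2*k+1).factorial : ℂ)⁻¹ • (z • σ) ^ (2*k+1))
        ((-(Complex.I) * (Real.sin θ : ℂ)) • σ) := by
      have := ((Complex.hasSum_sin (θ : ℂ)).mul_left (-Complex.I)).smul_const σ
      rw [Complex.ofReal_sin]
      convert this using 2 with k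
      rw [smul_pow, hodd, smul_smul]
      congr 1
      rw [pow_succ, hzsq, hz]
      field_simp
      ring
    exact HasSum.even_add_odd he ho
  rw [NormedSpace.exp_eq_tsum (𝕂 := ℂ)]
  exact hf.tsum_eq

lemma trig_shift (K P Q a : ℝ) :
    HasDerivAt (fun β : ℝ => K + P * Real.cos β + Q * Real.sin β)
      ((1/2) * ((K + P * Real.cos (a + Real.pi/2) + Q * Real.sin (a + Real.pi/2))
        - (K + P * Real.cos (a - Real.pi/2) + Q * Real.sin (a - Real.pi/2)))) a := by
  have h : HasDerivAt (fun β : ℝ => K + P * Real.cos β + Q * Real.sin β)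
      (P * (-Real.sin a) + Q * Real.cos a) a :=
    (((Real.hasDerivAt_cos a).const_mul P).const_add K).add
      ((Real.hasDerivAt_sin a).const_mul Q)
  convert h using 1
  rw [Real.cos_add, Real.sin_add, Real.cos_sub, Real.sin_sub]
  simp [Real.cos_pi_div_two, Real.sin_pi_div_two]
  ring

end AuxPS
-- ===== end auxiliary =====

noncomputable section

/-- The rotation gate `G(α) = e^{-iασ/2}` generated by `σ`, on `n` qubits. -/
def rotGateQ (n : ℕ) (σ : Matrix (Fin n → Fin 2) (Fin n → Fin 2) ℂ) (α : ℝ) :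
    Matrix (Fin n → Fin 2) (Fin n → Fin 2) ℂ :=
  NormedSpace.exp ((-(α / 2 : ℝ) * Complex.I : ℂ) • σ)

/-- **parameter-shift rule for `C_LHST^(j)`.** For unitaries `U,A,B` on
`n ≥ 1` qubits, a Hermitian involution `σ`, and a fixed qubit `j`, the map
`g(α) = C_LHST^(j)(U, A e^{−iασ/2} B)` is differentiable with
`g'(α) = (1/2)(g(α + π/2) − g(α − π/2))` for all real `α`. -/
theorem stmt16 (n : ℕ) (hn : 1 ≤ n) (j : Fin n)
    (U A B σ : Matrix (Fin n → Fin 2) (Fin n → Fin 2) ℂ)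
    (hU : U ∈ Matrix.unitaryGroup (Fin n → Fin 2) ℂ)
    (hA : A ∈ Matrix.unitaryGroup (Fin n → Fin 2) ℂ)
    (hB : B ∈ Matrix.unitaryGroup (Fin n → Fin 2) ℂ)
    (hherm : σᴴ = σ) (hinv : σ * σ = 1) (α : ℝ) :
    HasDerivAt (fun β : ℝ => CLHSTj n j U (A * rotGateQ n σ β * B))
      ((1 / 2) * (CLHSTj n j U (A * rotGateQ n σ (α + Real.pi / 2) * B) -
        CLHSTj n j U (A * rotGateQ n σ (α - Real.pi / 2) * B))) α := by
  classical
  set X := U * (Bᴴ * Aᴴ) with hX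
  set Y := U * (Bᴴ * (σ * Aᴴ)) with hY
  set aR := (FeB n j X X).re with haR
  set bR := (FeB n j Y Y).re with hbR
  set dR := (Complex.I * FeB n j Y X - Complex.I * FeB n j X Y).re with hdR
  have hG : ∀ β : ℝ, rotGateQ n σ β
      = ((Real.cos (β/2) : ℝ) : ℂ) • (1 : Matrix (Fin n → Fin 2) (Fin n → Fin 2) ℂ)
        + (-(Complex.I) * (Real.sin (β/2) : ℝ)) • σ := by
    intro β
    rw [rotGateQ]
    exact exp_invol σ hinv (β/2)
  have hW : ∀ β : ℝ, U * (A * rotGateQ n σ β * B)ᴴ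
      = ((Real.cos (β/2) : ℝ) : ℂ) • X + (((Real.sin (β/2) : ℝ) : ℂ) * Complex.I) • Y := by
    intro β
    rw [hG β, Matrix.conjTranspose_mul, Matrix.conjTranspose_mul, Matrix.conjTranspose_add,
      Matrix.conjTranspose_smul, Matrix.conjTranspose_smul, Matrix.conjTranspose_one, hherm]
    simp only [Complex.star_def, _root_.map_mul, map_neg, Complex.conj_ofReal, Complex.conj_I,
      neg_neg]
    simp only [Matrix.add_mul, Matrix.mul_add, Matrix.smul_mul, Matrix.mul_smul, Matrix.one_mul,
      hX, hY, Matrix.mul_assoc]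
    congr 1
    rw [mul_comm]
  have key : ∀ β : ℝ, CLHSTj n j U (A * rotGateQ n σ β * B)
      = (1 - (aR + bR)/2) + ((bR - aR)/2) * Real.cos β + (-dR/2) * Real.sin β := by
    intro β
    have hre : (((Real.cos (β/2) : ℝ) : ℂ)^2 * FeB n j X X
        + (((Real.cos (β/2) : ℝ) : ℂ) * ((Real.sin (β/2) : ℝ) : ℂ) * Complex.I) * FeB n j Y X
        + (-(((Real.cos (β/2) : ℝ) : ℂ) * ((Real.sin (β/2) : ℝ) : ℂ) * Complex.I)) * FeB n j X Y
        + (((Real.sin (β/2) : ℝ) : ℂ)^2) * FeB n j Y Y).re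
        = (Real.cos (β/2))^2 * aR + (Real.cos (β/2) * Real.sin (β/2)) * dR
          + (Real.sin (β/2))^2 * bR := by
      have hrw : (((Real.cos (β/2) : ℝ) : ℂ)^2 * FeB n j X X
          + (((Real.cos (β/2) : ℝ) : ℂ) * ((Real.sin (β/2) : ℝ) : ℂ) * Complex.I) * FeB n j Y X
          + (-(((Real.cos (β/2) : ℝ) : ℂ) * ((Real.sin (β/2) : ℝ) : ℂ) * Complex.I)) * FeB n j X Y
          + (((Real.sin (β/2) : ℝ) : ℂ)^2) * FeB n j Y Y)
          = ((Real.cos (β/2)^2 : ℝ) : ℂ) * FeB n j X X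
            + ((Real.cos (β/2) * Real.sin (β/2) : ℝ) : ℂ)
              * (Complex.I * FeB n j Y X - Complex.I * FeB n j X Y)
            + ((Real.sin (β/2)^2 : ℝ) : ℂ) * FeB n j Y Y := by
        push_cast
        ring
      rw [hrw]
      simp only [Complex.add_re, Complex.re_ofReal_mul, haR, hbR, hdR]
    have hc2 : Real.cos (β/2)^2 = 1/2 + Real.cos β/2 := by
      have hb : 2 * (β/2) = β := by ring
      rw [Real.cos_sq, hb]
    have hs2 : Real.sin (β/2)^2 = 1/2 - Real.cos β/2 := by
      have := Real.sin_sq_add_cos_sq (β/2)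
      nlinarith [hc2]
    have hcs : Real.cos (β/2) * Real.sin (β/2) = Real.sin β/2 := by
      have h2 : Real.sin (2 * (β/2)) = 2 * Real.sin (β/2) * Real.cos (β/2) :=
        Real.sin_two_mul (β/2)
      have hb : 2 * (β/2) = β := by ring
      rw [hb] at h2
      linarith [h2]
    rw [CLHSTj, Fe, FeC_eq_FeB, hW β, FeB_expand, hre, hc2, hs2, hcs]
    ring
  simp only [key]
  exact trig_shift _ _ _ α


end
end

section
/- Let n ≥ 1 and let U' be a 2^n × 2^n unitary matrix. Let U₂ := I_{2^n} ⊗ |0⟩⟨0| + U' ⊗ |1⟩⟨1| be the controlled-U' unitary on n + 1 qubits, with qubit n + 1 the control. Then the local Hilbert-Schmidt cost on the control qubit, with the trainable unitary taken to be the identity, satisfies C_LHST^{(n+1)}(U₂, I) = 1/2 − Re(Tr(U'))/2^{n+1}. -/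
open Matrix Kronecker Complex

noncomputable section

/-- The controlled-`U'` unitary `I ⊗ |0⟩⟨0| + U' ⊗ |1⟩⟨1|` on `n + 1` qubits, with qubit
`n + 1` (the last qubit) the control: it acts as the identity on the first `n` qubits
when the control is `|0⟩` and as `U'` when the control is `|1⟩`. -/
def ctrlLast (n : ℕ) (U' : Matrix (Fin n → Fin 2) (Fin n → Fin 2) ℂ) :
    Matrix (Fin (n + 1) → Fin 2) (Fin (n + 1) → Fin 2) ℂ :=
  Matrix.of fun s t =>
    if s (Fin.last n) = t (Fin.last n) then
      (if s (Fin.last n) = 0 then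
        (if (fun i : Fin n => s i.castSucc) = (fun i : Fin n => t i.castSucc) then 1 else 0)
      else U' (fun i : Fin n => s i.castSucc) (fun i : Fin n => t i.castSucc))
    else 0

theorem sum_snoc (n : ℕ) {M : Type*} [AddCommMonoid M] (f : (Fin (n+1) → Fin 2) → M) :
    ∑ s, f s = ∑ c : Fin 2, ∑ s' : Fin n → Fin 2, f (Fin.snoc s' c) := by
  rw [show (∑ c : Fin 2, ∑ s' : Fin n → Fin 2, f (Fin.snoc s' c))
      = ∑ p : Fin 2 × (Fin n → Fin 2), f (Fin.snoc p.2 p.1) from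
    (Fintype.sum_prod_type (fun p : Fin 2 × (Fin n → Fin 2) => f (Fin.snoc p.2 p.1))).symm]
  exact (Fintype.sum_equiv (Fin.snocEquiv fun _ => Fin 2) _ _ fun p => rfl).symm

theorem snoc_eq_snoc_iff {n : ℕ} {s t : Fin n → Fin 2} {a b : Fin 2} :
    (Fin.snoc s a : Fin (n+1) → Fin 2) = Fin.snoc t b ↔ s = t ∧ a = b := by
  constructor
  · intro h
    refine ⟨funext fun i => ?_, ?_⟩
    · simpa using congrFun h i.castSucc
    · simpa using congrFun h (Fin.last n)
  · rintro ⟨rfl, rfl⟩; rfl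

theorem EjCtrl (n : ℕ) (U' : Matrix (Fin n → Fin 2) (Fin n → Fin 2) ℂ) (x y : Fin 2) :
    Ej (n+1) (Fin.last n) (ctrlLast n U') (Matrix.single x y 1) x y =
      (1 / 2 ^ n) * ∑ r : Fin n → Fin 2, ∑ s : Fin n → Fin 2,
        (if x = 0 then (if r = s then (1:ℂ) else 0) else U' r s) *
          star (if y = 0 then (if r = s then (1:ℂ) else 0) else U' r s) := by
  simp only [Ej, Matrix.of_apply]
  simp only [sum_snoc]
  simp only [Fin.update_snoc_last, Fin.snoc_last, Fin.snoc_castSucc, snoc_eq_snoc_iff,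
    Matrix.single, Matrix.of_apply, ctrlLast, and_true]
  simp only [mul_ite, ite_mul, mul_zero, zero_mul, mul_one, one_mul, apply_ite (star : ℂ → ℂ), star_zero,
    ite_and, Finset.sum_ite_eq, Finset.sum_ite_eq', Finset.mem_univ, if_true,
    Finset.sum_ite_irrel, Finset.sum_const_zero]
  simp only [Finset.sum_const, Finset.card_univ, Fintype.card_fin, nsmul_eq_mul,
    Nat.add_sub_cancel, Nat.cast_ofNat, pow_succ]
  split_ifs <;> ring_nf <;> simp

theorem feC_aux (n : ℕ) (U' : Matrix (Fin n → Fin 2) (Fin n → Fin 2) ℂ) :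
    FeC (n+1) (Fin.last n) (ctrlLast n U') 1 =
      (1/4) * ∑ x : Fin 2, ∑ y : Fin 2,
        Ej (n+1) (Fin.last n) (ctrlLast n U') (Matrix.single x y 1) x y := by
  simp only [FeC, dotProduct, Matrix.mulVec, tensorId, phi2, phi2Proj, Matrix.conjTranspose_one,
    mul_one, Matrix.of_apply, Pi.star_apply, Fintype.sum_prod_type, Fin.sum_univ_two]
  norm_num [Complex.star_def, Complex.conj_ofReal]
  have hne : ((Real.sqrt 2 : ℝ) : ℂ) ≠ 0 := by
    simp [Complex.ofReal_ne_zero, Real.sqrt_ne_zero']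
  have hsq : ((Real.sqrt 2 : ℝ) : ℂ)^2 = 2 := by
    rw [← Complex.ofReal_pow, Real.sq_sqrt (by norm_num)]; norm_num
  field_simp
  ring_nf
  rw [hsq]; ring

theorem feC_val (n : ℕ) (U' : Matrix (Fin n → Fin 2) (Fin n → Fin 2) ℂ)
    (hU' : U' ∈ Matrix.unitaryGroup (Fin n → Fin 2) ℂ) :
    FeC (n+1) (Fin.last n) (ctrlLast n U') 1 =
      ((1/2 + (U'.trace).re / 2^(n+1) : ℝ) : ℂ) := by
  rw [feC_aux]
  simp only [Fin.sum_univ_two, EjCtrl]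
  have hTr : (∑ r : Fin n → Fin 2, ∑ s : Fin n → Fin 2, U' r s * star (U' r s)) = (2^n : ℂ) := by
    have hu : U' * U'ᴴ = 1 := by
      have := hU'.2
      rwa [Matrix.star_eq_conjTranspose] at this
    calc (∑ r : Fin n → Fin 2, ∑ s : Fin n → Fin 2, U' r s * star (U' r s))
        = (U' * U'ᴴ).trace := by
          simp [Matrix.trace, Matrix.diag, Matrix.mul_apply, Matrix.conjTranspose_apply]
      _ = (2^n : ℂ) := by
          rw [hu, Matrix.trace_one]
          simp [Fintype.card_fun]
  norm_num [apply_ite (star : ℂ → ℂ), ite_mul, mul_ite, Finset.sum_ite_eq',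
    Matrix.trace, Matrix.diag, Finset.sum_const, Fintype.card_fun, hTr]
  rw [show (∑ x : Fin n → Fin 2, ∑ x_1 : Fin n → Fin 2, U' x x_1 * (starRingEnd ℂ) (U' x x_1)) = ((2:ℂ)^n) from hTr]
  have hconj : (∑ x : Fin n → Fin 2, (starRingEnd ℂ) (U' x x)) + ∑ x : Fin n → Fin 2, U' x x
      = 2 * ∑ i : Fin n → Fin 2, ((U' i i).re : ℂ) := by
    rw [← Finset.sum_add_distrib, Finset.mul_sum]
    refine Finset.sum_congr rfl fun i _ => ?_
    rw [add_comm, Complex.add_conj]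
    push_cast; ring
  have h2n : ((2:ℂ)^n) ≠ 0 := pow_ne_zero _ two_ne_zero
  rw [pow_succ]
  field_simp
  rw [show (∑ x : Fin n → Fin 2, (starRingEnd ℂ) (U' x x))
      = 2 * (∑ i : Fin n → Fin 2, ((U' i i).re : ℂ)) - ∑ x : Fin n → Fin 2, U' x x from by
    linear_combination hconj]
  ring

/-- For a unitary `U'` on `n ≥ 1` qubits and `U₂` the controlled-`U'`
on `n + 1` qubits with the last qubit the control, the local Hilbert-Schmidt cost on the
control qubit (trainable unitary the identity) is
`C_LHST^(n+1)(U₂, I) = 1/2 − Re(Tr U')/2^(n+1)`. -/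
theorem stmt17 (n : ℕ) (hn : 1 ≤ n)
    (U' : Matrix (Fin n → Fin 2) (Fin n → Fin 2) ℂ)
    (hU' : U' ∈ Matrix.unitaryGroup (Fin n → Fin 2) ℂ) :
    CLHSTj (n + 1) (Fin.last n) (ctrlLast n U') 1 =
      1 / 2 - (U'.trace).re / 2 ^ (n + 1) := by
  unfold CLHSTj Fe
  rw [feC_val n U' hU', Complex.ofReal_re]
  ring

end
end

section
/- Let n ≥ 1 and let U' be a 2^n × 2^n unitary matrix. Let U₂ := I_{2^n} ⊗ |0⟩⟨0| + U' ⊗ |1⟩⟨1| be the controlled-U' unitary on n + 1 qubits, with qubit n + 1 the control. Then for every j ∈ {1,…,n}, C_LHST^{(j)}(U₂, I_{2^{n+1}}) = (1/2) · C_LHST^{(j)}(U', I_{2^n}). -/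
open Matrix Kronecker Complex

noncomputable section

section Aux

abbrev Rt (n : ℕ) (j : Fin n) := {k : Fin n // k ≠ j} → Fin 2

def ee (n : ℕ) (j : Fin n) : (Fin n → Fin 2) ≃ Fin 2 × Rt n j := Equiv.funSplitAt j (Fin 2)

lemma ee_symm_apply (n : ℕ) (j : Fin n) (x : Fin 2) (v : Rt n j) (k : Fin n) :
    (ee n j).symm (x, v) k = if h : k = j then x else v ⟨k, h⟩ := by
  simp [ee, Equiv.funSplitAt, Equiv.piSplitAt]

lemma ee_symm_self (n : ℕ) (j : Fin n) (x : Fin 2) (v : Rt n j) :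
    (ee n j).symm (x, v) j = x := by simp [ee_symm_apply]

lemma update_ee_symm (n : ℕ) (j : Fin n) (x y : Fin 2) (v : Rt n j) :
    Function.update ((ee n j).symm (x, v)) j y = (ee n j).symm (y, v) := by
  funext k
  by_cases h : k = j
  · subst h; simp [ee_symm_apply]
  · simp [Function.update, h, ee_symm_apply]

lemma ee_symm_inj (n : ℕ) (j : Fin n) (x y : Fin 2) (v w : Rt n j) :
    (ee n j).symm (x, v) = (ee n j).symm (y, w) ↔ x = y ∧ v = w := by
  rw [(ee n j).symm.injective.eq_iff, Prod.mk.injEq]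

lemma sum_split (n : ℕ) (j : Fin n) (f : (Fin n → Fin 2) → ℂ) :
    ∑ s, f s = ∑ x : Fin 2, ∑ v : Rt n j, f ((ee n j).symm (x, v)) := by
  rw [← (Equiv.sum_comp (ee n j).symm f), Fintype.sum_prod_type]

lemma Ej_std (n : ℕ) (j : Fin n) (W : Matrix (Fin n → Fin 2) (Fin n → Fin 2) ℂ)
    (x y : Fin 2) :
    Ej n j W (Matrix.single x y 1) x y =
      (1 / 2 ^ (n - 1) : ℂ) * ∑ ρ : Rt n j, ∑ σ : Rt n j,
        W ((ee n j).symm (x, ρ)) ((ee n j).symm (x, σ)) *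
          star (W ((ee n j).symm (y, ρ)) ((ee n j).symm (y, σ))) := by
  rw [Ej]
  simp only [Matrix.of_apply]
  simp only [sum_split n j]
  simp only [update_ee_symm, ee_symm_self, ee_symm_inj, Matrix.single,
    Matrix.of_apply]
  simp only [true_and, ite_and, mul_ite, mul_zero, mul_one, ite_mul, zero_mul]
  simp only [Finset.sum_ite_eq, Finset.mem_univ, if_true]
  simp only [Finset.sum_ite_irrel, Finset.sum_const_zero, Finset.sum_ite_eq, Finset.mem_univ,
    if_true, Finset.sum_const, Finset.card_univ, Fintype.card_fin, nsmul_eq_mul, Nat.cast_ofNat]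
  ring

def Sp (n : ℕ) (j : Fin n) (W : Matrix (Fin n → Fin 2) (Fin n → Fin 2) ℂ) : ℂ :=
  ∑ v : Rt n j, ∑ w : Rt n j,
    (∑ x : Fin 2, W ((ee n j).symm (x, v)) ((ee n j).symm (x, w))) *
      star (∑ x : Fin 2, W ((ee n j).symm (x, v)) ((ee n j).symm (x, w)))

theorem feC_eq (n : ℕ) (j : Fin n) (U : Matrix (Fin n → Fin 2) (Fin n → Fin 2) ℂ) :
    FeC n j U 1 = (1/4 : ℂ) * ∑ x : Fin 2, ∑ y : Fin 2,
      Ej n j U (Matrix.single x y 1) x y := by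
  have h2 : ((Real.sqrt 2 : ℝ):ℂ)⁻¹ ^ 2 = 1/2 := by
    rw [inv_pow, ← Complex.ofReal_pow, Real.sq_sqrt (by norm_num : (2:ℝ) ≥ 0)]
    norm_num
  simp only [FeC, Matrix.conjTranspose_one, mul_one, dotProduct, Matrix.mulVec, tensorId,
    phi2, phi2Proj, Matrix.of_apply, Pi.star_apply, Fintype.sum_prod_type, Fin.sum_univ_two]
  norm_num [Fin.ext_iff]
  ring_nf
  rw [h2]
  ring

lemma sum4_comm {α β : Type*} [Fintype α] [Fintype β] (f : α → α → β → β → ℂ) :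
    ∑ a : α, ∑ b : α, ∑ c : β, ∑ d : β, f a b c d
      = ∑ c : β, ∑ d : β, ∑ b : α, ∑ a : α, f a b c d := by
  calc ∑ a : α, ∑ b : α, ∑ c : β, ∑ d : β, f a b c d
      = ∑ a : α, ∑ c : β, ∑ b : α, ∑ d : β, f a b c d :=
        Finset.sum_congr rfl fun a _ => Finset.sum_comm
    _ = ∑ c : β, ∑ a : α, ∑ b : α, ∑ d : β, f a b c d := Finset.sum_comm
    _ = ∑ c : β, ∑ a : α, ∑ d : β, ∑ b : α, f a b c d :=
        Finset.sum_congr rfl fun c _ => Finset.sum_congr rfl fun a _ => Finset.sum_comm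
    _ = ∑ c : β, ∑ d : β, ∑ a : α, ∑ b : α, f a b c d :=
        Finset.sum_congr rfl fun c _ => Finset.sum_comm
    _ = ∑ c : β, ∑ d : β, ∑ b : α, ∑ a : α, f a b c d :=
        Finset.sum_congr rfl fun c _ => Finset.sum_congr rfl fun d _ => Finset.sum_comm

theorem keyA (n : ℕ) (j : Fin n) (U : Matrix (Fin n → Fin 2) (Fin n → Fin 2) ℂ) :
    FeC n j U 1 = (1 / 2 ^ (n - 1) : ℂ) * (1/4) * Sp n j U := by
  rw [feC_eq, Sp]
  simp only [Ej_std]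
  simp only [star_sum, Finset.sum_mul, Finset.mul_sum]
  rw [sum4_comm]
  refine Finset.sum_congr rfl fun ρ _ => Finset.sum_congr rfl fun σ _ =>
    Finset.sum_congr rfl fun a _ => Finset.sum_congr rfl fun b _ => ?_
  ring

variable {n : ℕ} {j : Fin n}

lemma last_ne_castSucc (j : Fin n) : (Fin.last n) ≠ j.castSucc := (Fin.castSucc_lt_last j).ne'

def lidx (j : Fin n) : {k : Fin (n+1) // k ≠ j.castSucc} := ⟨Fin.last n, last_ne_castSucc j⟩

def vrest (j : Fin n) (v : Rt (n+1) j.castSucc) : Rt n j :=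
  fun k => v ⟨k.1.castSucc, by simpa [Fin.castSucc_inj] using k.2⟩

def epsilon (j : Fin n) : Fin 2 × Rt n j ≃ Rt (n+1) j.castSucc where
  toFun p k := if h : k.1 = Fin.last n then p.1 else
    p.2 ⟨(k.1).castPred h, fun hc => k.2 (by rw [← Fin.castSucc_castPred k.1 h, hc])⟩
  invFun v := (v (lidx j), vrest j v)
  left_inv p := by
    ext k
    · simp [lidx]
    · simp [vrest, Fin.ne_last_of_lt (Fin.castSucc_lt_last k.1)]
  right_inv v := by
    funext k
    by_cases h : k.1 = Fin.last n
    · simp only [dif_pos h, lidx]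
      congr 1
      exact Subtype.ext h.symm
    · simp only [dif_neg h, vrest]
      exact congrArg v (Subtype.ext (Fin.castSucc_castPred k.1 h))

lemma epsilon_last (b : Fin 2) (ρ : Rt n j) : epsilon j (b, ρ) (lidx j) = b := by
  simp [epsilon, lidx]

lemma vrest_epsilon (b : Fin 2) (ρ : Rt n j) : vrest j (epsilon j (b, ρ)) = ρ := by
  funext k
  simp [vrest, epsilon, Fin.ne_last_of_lt (Fin.castSucc_lt_last k.1)]

lemma restrict_symm (x : Fin 2) (v : Rt (n+1) j.castSucc) :
    (fun i : Fin n => ((ee (n+1) j.castSucc).symm (x, v)) i.castSucc)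
      = (ee n j).symm (x, vrest j v) := by
  funext i
  by_cases h : i = j
  · subst h; simp [ee_symm_apply]
  · simp only [ee_symm_apply]
    rw [dif_neg (by simpa [Fin.castSucc_inj] using h), dif_neg h]
    rfl

lemma symm_last (x : Fin 2) (v : Rt (n+1) j.castSucc) :
    ((ee (n+1) j.castSucc).symm (x, v)) (Fin.last n) = v (lidx j) := by
  rw [ee_symm_apply, dif_neg (last_ne_castSucc j)]
  rfl

lemma ctrl_entry (U' : Matrix (Fin n → Fin 2) (Fin n → Fin 2) ℂ) (x : Fin 2)
    (v w : Rt (n+1) j.castSucc) :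
    ctrlLast n U' ((ee (n+1) j.castSucc).symm (x, v)) ((ee (n+1) j.castSucc).symm (x, w)) =
      if v (lidx j) = w (lidx j) then
        (if v (lidx j) = 0 then (if vrest j v = vrest j w then 1 else 0)
         else U' ((ee n j).symm (x, vrest j v)) ((ee n j).symm (x, vrest j w)))
      else 0 := by
  rw [ctrlLast]
  simp only [Matrix.of_apply, symm_last, restrict_symm, ee_symm_inj, true_and]

lemma sum_splitB (f : Rt (n+1) j.castSucc → ℂ) :
    ∑ v, f v = ∑ b : Fin 2, ∑ ρ : Rt n j, f (epsilon j (b, ρ)) := by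
  rw [← Equiv.sum_comp (epsilon j) f, Fintype.sum_prod_type]

theorem keyB (U' : Matrix (Fin n → Fin 2) (Fin n → Fin 2) ℂ) :
    Sp (n+1) j.castSucc (ctrlLast n U') = 2^(n+1) + Sp n j U' := by
  have hcard : ((Fintype.card (Rt n j) : ℂ)) * 2 = 2^n := by
    have h2 : Fintype.card (Rt n j) * 2 = 2 ^ n := by
      have h := Fintype.card_congr (ee n j)
      simp only [Fintype.card_fun, Fintype.card_fin, Fintype.card_prod] at h
      rw [Fintype.card_fun, Fintype.card_fin]
      omega
    calc ((Fintype.card (Rt n j) : ℂ)) * 2 = ((Fintype.card (Rt n j) * 2 : ℕ) : ℂ) := by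
          push_cast; ring
      _ = 2 ^ n := by rw [h2]; push_cast; ring
  rw [Sp]
  simp only [sum_splitB]
  simp only [ctrl_entry, epsilon_last, vrest_epsilon]
  simp only [Fin.sum_univ_two]
  norm_num
  rw [Sp]
  simp only [Fin.sum_univ_two, Complex.star_def, map_add]
  congr 1
  have hsummand : ∀ x x1 : Rt n j,
      ((if x = x1 then (1:ℂ) else 0) + if x = x1 then 1 else 0) *
        ((if x = x1 then (1:ℂ) else 0) + if x = x1 then 1 else 0)
      = if x = x1 then 4 else 0 := by
    intro x x1
    by_cases h : x = x1 <;> simp [h] <;> norm_num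
  simp only [hsummand, Finset.sum_ite_eq, Finset.mem_univ, if_true, Finset.sum_const,
    Finset.card_univ, nsmul_eq_mul]
  linear_combination (2:ℂ) * hcard

end Aux

/-- For a unitary `U'` on `n ≥ 1` qubits and `U₂` the controlled-`U'`
on `n + 1` qubits with the last qubit the control, for every `j ∈ {1,…,n}`:
`C_LHST^(j)(U₂, I) = (1/2)·C_LHST^(j)(U', I)`. -/
theorem stmt18 (n : ℕ) (hn : 1 ≤ n)
    (U' : Matrix (Fin n → Fin 2) (Fin n → Fin 2) ℂ)
    (hU' : U' ∈ Matrix.unitaryGroup (Fin n → Fin 2) ℂ) (j : Fin n) :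
    CLHSTj (n + 1) j.castSucc (ctrlLast n U') 1 = (1 / 2) * CLHSTj n j U' 1 := by
  obtain ⟨m, rfl⟩ : ∃ m, n = m + 1 := ⟨n - 1, by omega⟩
  have hC : FeC (m + 1 + 1) j.castSucc (ctrlLast (m + 1) U') 1
      = (1/2 : ℂ) + (1/2) * FeC (m + 1) j U' 1 := by
    rw [keyA, keyB, keyA]
    have hne : (2:ℂ) ^ m ≠ 0 := pow_ne_zero _ two_ne_zero
    norm_num [pow_succ]
    field_simp
    ring
  rw [CLHSTj, CLHSTj, Fe, Fe, hC]
  simp only [Complex.add_re, Complex.mul_re, Complex.div_re]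
  norm_num
  ring

end
end
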